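/- Every normalized two-action polymatrix game has a 1/3-well-supported Nash equilibrium: there exists a strategy profile s such that for every player i, if s_i > 0 then u_i(1, s) ≥ max(u_i(0, s), u_i(1, s)) − 1/3, and if s_i < 1 then u_i(0, s) ≥ max(u_i(0, s), u_i(1, s)) − 1/3. -/
import Mathlib

open Finset
open scoped Classical

/-- The payoff of player `i` for playing action `a` against the profile `s`
(where `s j ∈ [0,1]` is the probability that `j` plays action `true`):
`u_i(a, s) = Σ_{j : E i j} ((1 − s j)·A i j a false + s j·A i j a true)`. -/
noncomputable def polyPay {V : Type} [Fintype V]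
    (E : V → V → Bool) (A : V → V → Bool → Bool → ℝ)
    (i : V) (a : Bool) (s : V → ℝ) : ℝ :=
  ∑ j ∈ univ.filter (fun j => E i j = true),
    ((1 - s j) * A i j a false + s j * A i j a true)

section Aux

variable {V : Type} [Fintype V] (E : V → V → Bool) (A : V → V → Bool → Bool → ℝ)

/-- Contribution of neighbor `j` (playing `1` w.p. `x`) to the payoff difference
`u_i(1) - u_i(0)`. -/
noncomputable def pmGf (i j : V) (x : ℝ) : ℝ :=
  (1 - x) * (A i j true false - A i j false false) +
    x * (A i j true true - A i j false true)

/-- Payoff difference `u_i(1,s) - u_i(0,s)`. -/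
noncomputable def pmD (i : V) (s : V → ℝ) : ℝ :=
  ∑ j ∈ univ.filter (fun j => E i j = true), pmGf A i j (s j)

noncomputable def pmMax (i j : V) : ℝ :=
  max (A i j true false - A i j false false) (A i j true true - A i j false true)

noncomputable def pmMin (i j : V) : ℝ :=
  min (A i j true false - A i j false false) (A i j true true - A i j false true)

/-- Upper bound on `pmD i` when players in `R` are free in `[0,1]` and
players outside `R` play `t`. -/
noncomputable def pmHi (R : Finset V) (t : V → ℝ) (i : V) : ℝ :=
  ∑ j ∈ univ.filter (fun j => E i j = true),
    (if j ∈ R then pmMax A i j else pmGf A i j (t j))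

noncomputable def pmLo (R : Finset V) (t : V → ℝ) (i : V) : ℝ :=
  ∑ j ∈ univ.filter (fun j => E i j = true),
    (if j ∈ R then pmMin A i j else pmGf A i j (t j))

lemma pmGf_le_pmMax (i j : V) {x : ℝ} (hx : x ∈ Set.Icc (0:ℝ) 1) :
    pmGf A i j x ≤ pmMax A i j := by
  obtain ⟨h0, h1⟩ := hx
  have hp := le_max_left (A i j true false - A i j false false)
    (A i j true true - A i j false true)
  have hq := le_max_right (A i j true false - A i j false false)
    (A i j true true - A i j false true)
  unfold pmGf pmMax
  nlinarith

lemma pmMin_le_pmGf (i j : V) {x : ℝ} (hx : x ∈ Set.Icc (0:ℝ) 1) :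
    pmMin A i j ≤ pmGf A i j x := by
  obtain ⟨h0, h1⟩ := hx
  have hp := min_le_left (A i j true false - A i j false false)
    (A i j true true - A i j false true)
  have hq := min_le_right (A i j true false - A i j false false)
    (A i j true true - A i j false true)
  unfold pmGf pmMin
  nlinarith

lemma pmMin_add_pmMax (i j : V) :
    pmMin A i j + pmMax A i j = 2 * pmGf A i j (1/2) := by
  unfold pmMin pmMax pmGf
  rw [min_add_max]
  ring

variable (hnorm : ∀ (i : V) (a : Bool) (f : V → Bool),
      (0 ≤ ∑ j ∈ univ.filter (fun j => E i j = true), A i j a (f j)) ∧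
      (∑ j ∈ univ.filter (fun j => E i j = true), A i j a (f j)) ≤ 1)

include hnorm

lemma pmSumMax_le (i : V) :
    ∑ j ∈ univ.filter (fun j => E i j = true), pmMax A i j ≤ 1 := by
  classical
  let f : V → Bool := fun j =>
    if (A i j true false - A i j false false) ≤ (A i j true true - A i j false true)
    then true else false
  have h1 := (hnorm i true f).2
  have h2 := (hnorm i false f).1
  have heq : ∑ j ∈ univ.filter (fun j => E i j = true), pmMax A i j
      = ∑ j ∈ univ.filter (fun j => E i j = true), (A i j true (f j) - A i j false (f j)) := by
    refine Finset.sum_congr rfl fun j _ => ?_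
    by_cases hc : (A i j true false - A i j false false) ≤ (A i j true true - A i j false true)
    · have hfj : f j = true := if_pos hc
      rw [hfj]
      simpa [pmMax] using max_eq_right hc
    · have hfj : f j = false := if_neg hc
      rw [hfj]
      simpa [pmMax] using max_eq_left (le_of_not_ge hc)
  rw [heq, Finset.sum_sub_distrib]
  linarith

lemma le_pmSumMin (i : V) :
    -1 ≤ ∑ j ∈ univ.filter (fun j => E i j = true), pmMin A i j := by
  classical
  let f : V → Bool := fun j =>
    if (A i j true true - A i j false true) ≤ (A i j true false - A i j false false)
    then true else false
  have h1 := (hnorm i true f).1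
  have h2 := (hnorm i false f).2
  have heq : ∑ j ∈ univ.filter (fun j => E i j = true), pmMin A i j
      = ∑ j ∈ univ.filter (fun j => E i j = true), (A i j true (f j) - A i j false (f j)) := by
    refine Finset.sum_congr rfl fun j _ => ?_
    by_cases hc : (A i j true true - A i j false true) ≤ (A i j true false - A i j false false)
    · have hfj : f j = true := if_pos hc
      rw [hfj]
      simpa [pmMin] using min_eq_right hc
    · have hfj : f j = false := if_neg hc
      rw [hfj]
      simpa [pmMin] using min_eq_left (le_of_not_ge hc)
  rw [heq, Finset.sum_sub_distrib]
  linarith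

omit hnorm

lemma pmD_le_pmHi (R : Finset V) (t : V → ℝ) (s : V → ℝ)
    (hs : ∀ j, s j ∈ Set.Icc (0:ℝ) 1) (hagree : ∀ j ∉ R, s j = t j) (i : V) :
    pmD E A i s ≤ pmHi E A R t i := by
  refine Finset.sum_le_sum fun j _ => ?_
  by_cases hj : j ∈ R
  · simpa [hj] using pmGf_le_pmMax A i j (hs j)
  · simp [hj, hagree j hj]

lemma pmLo_le_pmD (R : Finset V) (t : V → ℝ) (s : V → ℝ)
    (hs : ∀ j, s j ∈ Set.Icc (0:ℝ) 1) (hagree : ∀ j ∉ R, s j = t j) (i : V) :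
    pmLo E A R t i ≤ pmD E A i s := by
  refine Finset.sum_le_sum fun j _ => ?_
  by_cases hj : j ∈ R
  · simpa [hj] using pmMin_le_pmGf A i j (hs j)
  · simp [hj, hagree j hj]

include hnorm

lemma pmHi_le_one (R : Finset V) (t : V → ℝ) (ht : ∀ j, t j ∈ Set.Icc (0:ℝ) 1) (i : V) :
    pmHi E A R t i ≤ 1 := by
  refine le_trans (Finset.sum_le_sum fun j _ => ?_) (pmSumMax_le E A hnorm i)
  by_cases hj : j ∈ R
  · simp [hj]
  · simpa [hj] using pmGf_le_pmMax A i j (ht j)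

lemma neg_one_le_pmLo (R : Finset V) (t : V → ℝ) (ht : ∀ j, t j ∈ Set.Icc (0:ℝ) 1) (i : V) :
    -1 ≤ pmLo E A R t i := by
  refine le_trans (le_pmSumMin E A hnorm i) (Finset.sum_le_sum fun j _ => ?_)
  by_cases hj : j ∈ R
  · simp [hj]
  · simpa [hj] using pmMin_le_pmGf A i j (ht j)

/-- Main inductive construction. -/
lemma pmAux : ∀ R : Finset V, ∀ t : V → ℝ, (∀ j, t j ∈ Set.Icc (0:ℝ) 1) →
    ∃ s : V → ℝ, (∀ j, s j ∈ Set.Icc (0:ℝ) 1) ∧ (∀ j ∉ R, s j = t j) ∧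
      ∀ i ∈ R, (0 < s i → -(1/3) ≤ pmD E A i s) ∧ (s i < 1 → pmD E A i s ≤ 1/3) := by
  classical
  intro R
  induction R using Finset.strongInduction with
  | _ R ih =>
    intro t ht
    by_cases hA : ∃ i ∈ R, pmHi E A R t i ≤ 1/3
    · -- safe to set `s i = 0`
      obtain ⟨i, hiR, hle⟩ := hA
      obtain ⟨s, hs, hagree, hcond⟩ := ih (R.erase i) (Finset.erase_ssubset hiR)
        (fun j => if j = i then 0 else t j)
        (fun j => by by_cases hj : j = i <;> simp [hj, ht j])
      have hagreeR : ∀ j ∉ R, s j = t j := by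
        intro j hjR
        have hje : j ∉ R.erase i := fun h => hjR (Finset.mem_of_mem_erase h)
        have hji : j ≠ i := fun h => hjR (h ▸ hiR)
        simpa [hji] using hagree j hje
      have hsi : s i = 0 := by
        simpa using hagree i (Finset.notMem_erase i R)
      refine ⟨s, hs, hagreeR, fun i' hi'R => ?_⟩
      by_cases hii : i' = i
      · subst hii
        constructor
        · intro h0; rw [hsi] at h0; exact absurd h0 (lt_irrefl 0)
        · intro _
          exact le_trans (pmD_le_pmHi E A R t s hs hagreeR i') hle
      · exact hcond i' (Finset.mem_erase.mpr ⟨hii, hi'R⟩)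
    · by_cases hB : ∃ i ∈ R, -(1/3) ≤ pmLo E A R t i
      · -- safe to set `s i = 1`
        obtain ⟨i, hiR, hle⟩ := hB
        obtain ⟨s, hs, hagree, hcond⟩ := ih (R.erase i) (Finset.erase_ssubset hiR)
          (fun j => if j = i then 1 else t j)
          (fun j => by by_cases hj : j = i <;> simp [hj, ht j])
        have hagreeR : ∀ j ∉ R, s j = t j := by
          intro j hjR
          have hje : j ∉ R.erase i := fun h => hjR (Finset.mem_of_mem_erase h)
          have hji : j ≠ i := fun h => hjR (h ▸ hiR)
          simpa [hji] using hagree j hje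
        have hsi : s i = 1 := by
          simpa using hagree i (Finset.notMem_erase i R)
        refine ⟨s, hs, hagreeR, fun i' hi'R => ?_⟩
        by_cases hii : i' = i
        · subst hii
          constructor
          · intro _
            exact le_trans hle (pmLo_le_pmD E A R t s hs hagreeR i')
          · intro h1; rw [hsi] at h1; exact absurd h1 (lt_irrefl 1)
        · exact hcond i' (Finset.mem_erase.mpr ⟨hii, hi'R⟩)
      · -- all remaining players play 1/2
        push_neg at hA hB
        refine ⟨fun j => if j ∈ R then 1/2 else t j, ?_, ?_, ?_⟩
        · intro j
          by_cases hj : j ∈ R <;> simp [hj, ht j] <;> norm_num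
        · intro j hj; simp [hj]
        · intro i hiR
          set s : V → ℝ := fun j => if j ∈ R then 1/2 else t j with hsdef
          have hsbox : ∀ j, s j ∈ Set.Icc (0:ℝ) 1 := by
            intro j
            by_cases hj : j ∈ R <;> simp [hsdef, hj, ht j] <;> norm_num
          have hsum : pmLo E A R t i + pmHi E A R t i = 2 * pmD E A i s := by
            unfold pmLo pmHi pmD
            rw [← Finset.sum_add_distrib, Finset.mul_sum]
            refine Finset.sum_congr rfl fun j _ => ?_
            by_cases hj : j ∈ R
            · simp only [hj, if_true, hsdef]
              exact pmMin_add_pmMax A i j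
            · simp only [hj, if_false, hsdef]
              ring
          have hhi : pmHi E A R t i ≤ 1 := pmHi_le_one E A hnorm R t ht i
          have hlo : -1 ≤ pmLo E A R t i := neg_one_le_pmLo E A hnorm R t ht i
          have hA' := hA i hiR
          have hB' := hB i hiR
          constructor
          · intro _; linarith
          · intro _; linarith

end Aux

/-- Every normalized two-action polymatrix game has a 1/3-well-supported
Nash equilibrium. -/
theorem polymatrix_third_wsne {V : Type} [Fintype V]
    (E : V → V → Bool)
    (hsymm : ∀ i j, E i j = E j i) (hirr : ∀ i, E i i = false)
    (A : V → V → Bool → Bool → ℝ)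
    (hnorm : ∀ (i : V) (a : Bool) (f : V → Bool),
      (0 ≤ ∑ j ∈ univ.filter (fun j => E i j = true), A i j a (f j)) ∧
      (∑ j ∈ univ.filter (fun j => E i j = true), A i j a (f j)) ≤ 1) :
    ∃ s : V → ℝ, (∀ i, s i ∈ Set.Icc (0:ℝ) 1) ∧
      ∀ i : V,
        (0 < s i →
          polyPay E A i true s ≥
            max (polyPay E A i false s) (polyPay E A i true s) - 1 / 3) ∧
        (s i < 1 →
          polyPay E A i false s ≥
            max (polyPay E A i false s) (polyPay E A i true s) - 1 / 3) := by
  obtain ⟨s, hs, -, hcond⟩ := pmAux E A hnorm Finset.univ (fun _ => 0)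
    (fun j => by norm_num)
  refine ⟨s, hs, fun i => ?_⟩
  obtain ⟨h1, h2⟩ := hcond i (Finset.mem_univ i)
  have hD : pmD E A i s = polyPay E A i true s - polyPay E A i false s := by
    unfold pmD pmGf polyPay
    rw [← Finset.sum_sub_distrib]
    exact Finset.sum_congr rfl fun j _ => by ring
  rw [hD] at h1 h2
  constructor
  · intro h0
    have := h1 h0
    rw [ge_iff_le, sub_le_iff_le_add]
    exact max_le (by linarith) (by linarith)
  · intro hlt
    have := h2 hlt
    rw [ge_iff_le, sub_le_iff_le_add]
    exact max_le (by linarith) (by linarith)
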